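/- Let k ≥ 1, let v be a continuous plurisubharmonic function on the open ball B(0,3) ⊆ ℂ^k, and let M > 0. Then the family F of all continuous functions u : B(0,3) → ℝ such that v + u and v − u are plurisubharmonic and Ω_{B(0,2)}(u) ≤ M is uniformly equicontinuous on B(0,1): for every ε > 0 there exists δ > 0 such that |u(x) − u(y)| ≤ ε for every u ∈ F and all x, y ∈ B(0,1) with |x − y| ≤ δ. -/

import Mathlib

open Metric

/-- A continuous function `u` on `Ω ⊆ ℂ^k` is plurisubharmonic if it satisfies the
sub-mean value inequality on every complex line. -/
def IsPshOn {k : ℕ} (Ω : Set (EuclideanSpace ℂ (Fin k)))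
    (u : EuclideanSpace ℂ (Fin k) → ℝ) : Prop :=
  ∀ (a b : EuclideanSpace ℂ (Fin k)) (z₀ : ℂ) (ρ : ℝ), 0 < ρ →
    (∀ z : ℂ, ‖z - z₀‖ ≤ ρ → a + z • b ∈ Ω) →
    u (a + z₀ • b) ≤ (1 / (2 * Real.pi)) *
      ∫ θ in (0:ℝ)..(2 * Real.pi),
        u (a + (z₀ + (ρ : ℂ) * Complex.exp ((θ : ℂ) * Complex.I)) • b)

/-- The oscillation `Ω_U(g) = sup_U g - inf_U g = sup {|g x - g y| : x, y ∈ U}`. -/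
noncomputable def oscOn {X : Type*} [PseudoMetricSpace X] (U : Set X) (g : X → ℝ) : ℝ :=
  sSup {t : ℝ | ∃ x ∈ U, ∃ y ∈ U, t = |g x - g y|}

open MeasureTheory Real Set
open scoped ENNReal NNReal

lemma annulus_area (c : ℂ) (a b : ℝ) (ha : 0 ≤ a) (hab : a ≤ b) :
    (volume (closedBall c b \ ball c a)).toReal = π*b^2 - π*a^2 := by
  have hsub : ball c a ⊆ closedBall c b :=
    ball_subset_closedBall.trans (closedBall_subset_closedBall hab)
  have h := measure_diff hsub measurableSet_ball.nullMeasurableSet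
    (measure_ball_lt_top (μ := (volume : Measure ℂ))).ne
  rw [h, Complex.volume_closedBall, Complex.volume_ball,
    ENNReal.toReal_sub_of_le (by gcongr)
      (by simp [ENNReal.mul_ne_top, ENNReal.pow_ne_top, ENNReal.ofReal_ne_top])]
  have h1 : ((ENNReal.ofReal b ^ 2 * NNReal.pi : ℝ≥0∞)).toReal = b^2 * π := by
    rw [ENNReal.toReal_mul, ENNReal.toReal_pow, ENNReal.toReal_ofReal (by linarith)]
    simp [NNReal.coe_real_pi]
  have h2 : ((ENNReal.ofReal a ^ 2 * NNReal.pi : ℝ≥0∞)).toReal = a^2 * π := by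
    rw [ENNReal.toReal_mul, ENNReal.toReal_pow, ENNReal.toReal_ofReal ha]
    simp [NNReal.coe_real_pi]
  rw [h1, h2]; ring

lemma polar_bound (H : ℂ → ℝ) (r C : ℝ) (hr : 0 < r) (hC : 0 ≤ C)
    (hHc : ContinuousOn H (closedBall 0 (2*r)))
    (hcirc : ∀ ρ : ℝ, ρ ∈ Icc r (2*r) →
      |∫ θ in (0:ℝ)..(2*π), H ((ρ:ℂ) * Complex.exp ((θ:ℂ)*Complex.I))| ≤ C) :
    |∫ z in closedBall (0:ℂ) (2*r) \ ball 0 r, H z| ≤ 2*C*r^2 := by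
  set A0 : Set ℂ := closedBall (0:ℂ) (2*r) \ ball 0 r with hA0
  have hA0m : MeasurableSet A0 := measurableSet_closedBall.diff measurableSet_ball
  set q : ℝ × ℝ → ℂ := fun p => (p.1:ℂ) * Complex.exp ((p.2:ℂ)*Complex.I) with hq
  have hqsymm : ∀ p : ℝ × ℝ, Complex.polarCoord.symm p = q p := by
    intro p
    rw [Complex.polarCoord_symm_apply]
    simp [hq, Complex.exp_mul_I, Complex.ofReal_cos, Complex.ofReal_sin]
  have habsq : ∀ p : ℝ × ℝ, ‖q p‖ = |p.1| := by
    intro p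
    simp [hq, Complex.norm_exp_ofReal_mul_I]
  have hqc : Continuous q := by fun_prop
  set G : ℝ × ℝ → ℝ := fun p => p.1 • H (q p) with hG
  have step12 : ∫ z in A0, H z
      = ∫ p in polarCoord.target, p.1 • A0.indicator H (Complex.polarCoord.symm p) := by
    rw [← integral_indicator hA0m, ← Complex.integral_comp_polarCoord_symm]
  have htarget : polarCoord.target = Ioi (0:ℝ) ×ˢ Ioo (-π) π := rfl
  have step3 : ∫ p in polarCoord.target, p.1 • A0.indicator H (Complex.polarCoord.symm p)
      = ∫ p in polarCoord.target, (Icc r (2*r) ×ˢ (univ : Set ℝ)).indicator G p := by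
    apply setIntegral_congr_fun (by rw [htarget]; exact measurableSet_Ioi.prod measurableSet_Ioo)
    intro p hp
    rw [htarget] at hp
    have hp1 : 0 < p.1 := hp.1
    have hmem : q p ∈ A0 ↔ p.1 ∈ Icc r (2*r) := by
      simp only [hA0, mem_diff, mem_closedBall_zero_iff, mem_ball_zero_iff,
        habsq, abs_of_pos hp1, mem_Icc, not_lt]
      tauto
    by_cases h : p.1 ∈ Icc r (2*r)
    · simp only [hqsymm]
      rw [indicator_of_mem (hmem.mpr h), indicator_of_mem (by simp [h])]
    · simp only [hqsymm]
      rw [indicator_of_notMem (fun hh => h (hmem.mp hh)),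
        indicator_of_notMem (by simp [h]), smul_zero]
  have step45 : ∫ p in polarCoord.target, (Icc r (2*r) ×ˢ (univ : Set ℝ)).indicator G p
      = ∫ p in Icc r (2*r) ×ˢ Ioo (-π) π, G p := by
    rw [setIntegral_indicator (measurableSet_Icc.prod MeasurableSet.univ), htarget,
      Set.prod_inter_prod, Set.inter_univ,
      show (Ioi (0:ℝ) ∩ Icc r (2*r)) = Icc r (2*r) from
        inter_eq_self_of_subset_right (fun t ht => lt_of_lt_of_le hr ht.1)]
  -- continuity of G on the compact rectangle
  have hGc : ContinuousOn G (Icc r (2*r) ×ˢ Icc (-π) π) := by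
    apply ContinuousOn.smul continuous_fst.continuousOn
    apply hHc.comp hqc.continuousOn
    intro p hp
    simp only [mem_closedBall_zero_iff, habsq]
    rw [abs_of_pos (lt_of_lt_of_le hr hp.1.1)]
    exact hp.1.2
  have hGint : IntegrableOn G (Icc r (2*r) ×ˢ Ioo (-π) π) (volume.prod volume) := by
    have h1 : IntegrableOn G (Icc r (2*r) ×ˢ Icc (-π) π) volume :=
      hGc.integrableOn_compact (isCompact_Icc.prod isCompact_Icc)
    rw [← Measure.volume_eq_prod]
    exact h1.mono_set (Set.prod_mono subset_rfl Ioo_subset_Icc_self)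
  have step6 : ∫ p in Icc r (2*r) ×ˢ Ioo (-π) π, G p
      = ∫ ρ in Icc r (2*r), ∫ θ in Ioo (-π) π, G (ρ, θ) := by
    rw [Measure.volume_eq_prod, setIntegral_prod _ hGint]
  have hinner : ∀ ρ ∈ Icc r (2*r), |∫ θ in Ioo (-π) π, G (ρ, θ)| ≤ 2*r*C := by
    intro ρ hρ
    have hρ0 : 0 < ρ := lt_of_lt_of_le hr hρ.1
    set W : ℝ → ℝ := fun θ => H ((ρ:ℂ) * Complex.exp ((θ:ℂ)*Complex.I)) with hW
    have hGW : ∀ θ, G (ρ, θ) = ρ * W θ := fun θ => rfl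
    have h1 : ∫ θ in Ioo (-π) π, G (ρ, θ) = ∫ θ in (-π)..π, (ρ * W θ) := by
      rw [intervalIntegral.integral_of_le (by linarith [pi_pos]), integral_Ioc_eq_integral_Ioo]
      simp only [hGW]
    have hper : Function.Periodic W (2*π) := by
      intro θ
      simp only [hW]
      congr 2
      push_cast
      rw [add_mul, Complex.exp_add, Complex.exp_two_pi_mul_I, mul_one]
    have h2 : ∫ θ in (-π)..π, W θ = ∫ θ in (0:ℝ)..(2*π), W θ := by
      have h := hper.intervalIntegral_add_eq (-π) 0
      rw [zero_add] at h
      rw [show -π + 2*π = π from by ring] at h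
      exact h
    rw [h1, intervalIntegral.integral_const_mul, h2, abs_mul, abs_of_pos hρ0]
    exact mul_le_mul hρ.2 (hcirc ρ hρ) (abs_nonneg _) (by linarith)
  have hvol : (volume (Icc r (2*r))).toReal = r := by
    rw [Real.volume_Icc, ENNReal.toReal_ofReal (by linarith)]
    ring
  calc |∫ z in A0, H z| = |∫ ρ in Icc r (2*r), ∫ θ in Ioo (-π) π, G (ρ, θ)| := by
        rw [step12, step3, step45, step6]
    _ ≤ (2*r*C) * (volume (Icc r (2*r))).toReal := by
        rw [← Real.norm_eq_abs]
        refine norm_setIntegral_le_of_norm_le_const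
          (by rw [Real.volume_Icc]; exact ENNReal.ofReal_lt_top) ?_
        intro ρ hρ
        rw [Real.norm_eq_abs]
        exact hinner ρ hρ
    _ = 2*C*r^2 := by rw [hvol]; ring

set_option maxHeartbeats 4000000 in
/-- local content of Corollary 2.9 of the paper. Let `v` be a continuous
plurisubharmonic function on `B(0,3) ⊆ ℂ^k` and `M > 0`. The family of all continuous
`u : B(0,3) → ℝ` with `v + u` and `v - u` plurisubharmonic (i.e. `|dd^c u| ≤ dd^c v`) and
`Ω_{B(0,2)}(u) ≤ M` is uniformly equicontinuous on `B(0,1)`. -/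
theorem stmt_4 (k : ℕ) (hk : 1 ≤ k)
    (v : EuclideanSpace ℂ (Fin k) → ℝ)
    (hv_cont : ContinuousOn v (ball 0 3)) (hv_psh : IsPshOn (ball 0 3) v)
    (M : ℝ) (hM : 0 < M) :
    ∀ ε : ℝ, 0 < ε → ∃ δ : ℝ, 0 < δ ∧
      ∀ u : EuclideanSpace ℂ (Fin k) → ℝ,
        ContinuousOn u (ball 0 3) →
        IsPshOn (ball 0 3) (v + u) → IsPshOn (ball 0 3) (v - u) →
        oscOn (ball 0 2) u ≤ M →
        ∀ x ∈ ball (0 : EuclideanSpace ℂ (Fin k)) 1, ∀ y ∈ ball (0 : EuclideanSpace ℂ (Fin k)) 1,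
          dist x y ≤ δ → |u x - u y| ≤ ε := by
  intro ε hε
  -- uniform continuity of v on the closed ball of radius 5/2
  have hKball : closedBall (0 : EuclideanSpace ℂ (Fin k)) (5/2) ⊆ ball 0 3 :=
    closedBall_subset_ball (by norm_num)
  have huc : UniformContinuousOn v (closedBall (0 : EuclideanSpace ℂ (Fin k)) (5/2)) :=
    (isCompact_closedBall _ _).uniformContinuousOn_of_continuous (hv_cont.mono hKball)
  rw [Metric.uniformContinuousOn_iff_le] at huc
  obtain ⟨r0, hr0, hvmod⟩ := huc (ε/16) (by linarith)
  set r : ℝ := min (r0/2) (4⁻¹) with hrdef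
  have hr : 0 < r := lt_min (by linarith) (by norm_num)
  have h2r0 : 2*r ≤ r0 := by
    have := min_le_left (r0/2) (4⁻¹); linarith
  have hr4 : r ≤ 4⁻¹ := min_le_right _ _
  refine ⟨min r (r*ε/(14*M)), lt_min hr (by positivity), ?_⟩
  intro u hu_cont hvu hvmu hosc x hx y hy hdxy
  rcases eq_or_lt_of_le (dist_nonneg (x := x) (y := y)) with hd0 | hd
  · rw [eq_comm, dist_eq_zero] at hd0
    simp [hd0]; positivity
  set d : ℝ := dist x y with hddef
  have hdr : d ≤ r := hdxy.trans (min_le_left _ _)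
  have hdε : d ≤ r*ε/(14*M) := hdxy.trans (min_le_right _ _)
  have hdC : ((d:ℂ)) ≠ 0 := Complex.ofReal_ne_zero.mpr hd.ne'
  set b : EuclideanSpace ℂ (Fin k) := ((d:ℂ))⁻¹ • (y - x) with hbdef
  have hyx : ‖y - x‖ = d := (dist_eq_norm' x y).symm
  have hbnorm : ‖b‖ = 1 := by
    rw [hbdef, norm_smul, norm_inv, hyx, Complex.norm_real, Real.norm_eq_abs,
      abs_of_pos hd, inv_mul_cancel₀ hd.ne']
  have hdb : (d:ℂ) • b = y - x := by
    rw [hbdef, smul_smul, mul_inv_cancel₀ hdC, one_smul]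
  have hzb : ∀ z : ℂ, ‖z • b‖ = ‖z‖ := by
    intro z; rw [norm_smul, hbnorm, mul_one]
  have hxn : ‖x‖ < 1 := mem_ball_zero_iff.mp hx
  have hφ3 : ∀ z : ℂ, ‖z‖ < 2 → x + z • b ∈ ball (0 : EuclideanSpace ℂ (Fin k)) 3 := by
    intro z hz
    rw [mem_ball_zero_iff]
    calc ‖x + z • b‖ ≤ ‖x‖ + ‖z • b‖ := norm_add_le _ _
      _ < 3 := by rw [hzb]; linarith
  have hφK : ∀ z : ℂ, ‖z‖ ≤ 3/2 →
      x + z • b ∈ closedBall (0 : EuclideanSpace ℂ (Fin k)) (5/2) := by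
    intro z hz
    rw [mem_closedBall_zero_iff]
    calc ‖x + z • b‖ ≤ ‖x‖ + ‖z • b‖ := norm_add_le _ _
      _ ≤ 5/2 := by rw [hzb]; linarith
  have hφ2 : ∀ z : ℂ, ‖z‖ < 1 → x + z • b ∈ ball (0 : EuclideanSpace ℂ (Fin k)) 2 := by
    intro z hz
    rw [mem_ball_zero_iff]
    calc ‖x + z • b‖ ≤ ‖x‖ + ‖z • b‖ := norm_add_le _ _
      _ < 2 := by rw [hzb]; linarith
  have hφdist : ∀ z w : ℂ, dist (x + z • b) (x + w • b) = ‖z - w‖ := by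
    intro z w
    rw [dist_eq_norm, show x + z • b - (x + w • b) = (z - w) • b by rw [sub_smul]; abel, hzb]
  -- oscillation bound
  have hosc' : ∀ p ∈ ball (0 : EuclideanSpace ℂ (Fin k)) 2,
      ∀ q ∈ ball (0 : EuclideanSpace ℂ (Fin k)) 2, |u p - u q| ≤ M := by
    obtain ⟨B, hB⟩ := (isCompact_closedBall (0 : EuclideanSpace ℂ (Fin k)) 2).exists_bound_of_continuousOn
      (hu_cont.mono (closedBall_subset_ball (by norm_num)))
    intro p hp q hq
    have hbdd : BddAbove {t : ℝ | ∃ p ∈ ball (0 : EuclideanSpace ℂ (Fin k)) 2,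
        ∃ q ∈ ball (0 : EuclideanSpace ℂ (Fin k)) 2, t = |u p - u q|} := by
      refine ⟨2*B, ?_⟩
      rintro t ⟨p', hp', q', hq', rfl⟩
      have h1 := hB p' (ball_subset_closedBall hp')
      have h2 := hB q' (ball_subset_closedBall hq')
      rw [Real.norm_eq_abs] at h1 h2
      calc |u p' - u q'| ≤ |u p'| + |u q'| := abs_sub _ _
        _ ≤ 2*B := by linarith
    have hmem : |u p - u q| ∈ {t : ℝ | ∃ p ∈ ball (0 : EuclideanSpace ℂ (Fin k)) 2,
        ∃ q ∈ ball (0 : EuclideanSpace ℂ (Fin k)) 2, t = |u p - u q|} := ⟨p, hp, q, hq, rfl⟩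
    exact le_trans (le_csSup hbdd hmem) hosc
  -- geometry of circle points
  have habs_exp : ∀ (ρ θ : ℝ), 0 ≤ ρ → ‖(ρ:ℂ) * Complex.exp ((θ:ℂ)*Complex.I)‖ = ρ := by
    intro ρ θ hρ
    rw [norm_mul, Complex.norm_exp_ofReal_mul_I, mul_one, Complex.norm_real, Real.norm_eq_abs, abs_of_nonneg hρ]
  have hccont : ∀ (c : ℂ) (ρ : ℝ),
      Continuous (fun θ : ℝ => x + (c + (ρ:ℂ) * Complex.exp ((θ:ℂ)*Complex.I)) • b) := by
    intro c ρ; fun_prop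
  have hmean : ∀ c : ℂ, ‖c‖ ≤ 4⁻¹ → ∀ ρ : ℝ, ρ ∈ Icc r (2*r) →
      |(∫ θ in (0:ℝ)..(2*π), u (x + (c + (ρ:ℂ) * Complex.exp ((θ:ℂ) * Complex.I)) • b))
        - 2*π*(u (x + c • b))| ≤ 2*π*(ε/16) := by
    intro c hc ρ hρ
    have hρ0 : 0 < ρ := lt_of_lt_of_le hr hρ.1
    have hρ2 : ρ ≤ 2*r := hρ.2
    have hr12 : 2*r ≤ 2⁻¹ := by rw [hrdef]; have := min_le_right (r0/2) (4⁻¹); norm_num at this ⊢; linarith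
    have habsc : ∀ θ : ℝ, ‖c + (ρ:ℂ)*Complex.exp ((θ:ℂ)*Complex.I)‖ ≤ 3/4 := by
      intro θ
      calc ‖c + (ρ:ℂ)*Complex.exp ((θ:ℂ)*Complex.I)‖
          ≤ ‖c‖ + ‖(ρ:ℂ)*Complex.exp ((θ:ℂ)*Complex.I)‖ := norm_add_le _ _
        _ ≤ 4⁻¹ + ρ := by rw [habs_exp ρ θ hρ0.le]; linarith
        _ ≤ 3/4 := by norm_num; linarith
    have hcirc3 : ∀ θ : ℝ,
        x + (c + (ρ:ℂ)*Complex.exp ((θ:ℂ)*Complex.I)) • b ∈ ball (0 : EuclideanSpace ℂ (Fin k)) 3 := by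
      intro θ; exact hφ3 _ (lt_of_le_of_lt (habsc θ) (by norm_num))
    have hcircK : ∀ θ : ℝ,
        x + (c + (ρ:ℂ)*Complex.exp ((θ:ℂ)*Complex.I)) • b ∈ closedBall (0 : EuclideanSpace ℂ (Fin k)) (5/2) := by
      intro θ; exact hφK _ ((habsc θ).trans (by norm_num))
    have hcK : x + c • b ∈ closedBall (0 : EuclideanSpace ℂ (Fin k)) (5/2) :=
      hφK _ (hc.trans (by norm_num))
    have huint : IntervalIntegrable
        (fun θ : ℝ => u (x + (c + (ρ:ℂ)*Complex.exp ((θ:ℂ)*Complex.I)) • b)) volume 0 (2*π) :=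
      by apply Continuous.intervalIntegrable
         exact hu_cont.comp_continuous (hccont c ρ) hcirc3
    have hvint : IntervalIntegrable
        (fun θ : ℝ => v (x + (c + (ρ:ℂ)*Complex.exp ((θ:ℂ)*Complex.I)) • b)) volume 0 (2*π) :=
      by apply Continuous.intervalIntegrable
         exact hv_cont.comp_continuous (hccont c ρ) (fun θ => hφ3 _ (lt_of_le_of_lt (habsc θ) (by norm_num)))
    have hvub : ∀ θ ∈ Icc (0:ℝ) (2*π),
        v (x + (c + (ρ:ℂ)*Complex.exp ((θ:ℂ)*Complex.I)) • b) ≤ v (x + c • b) + ε/16 := by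
      intro θ _
      have hd1 : dist (x + (c + (ρ:ℂ)*Complex.exp ((θ:ℂ)*Complex.I)) • b) (x + c • b) ≤ r0 := by
        rw [hφdist, add_sub_cancel_left, habs_exp ρ θ hρ0.le]; linarith
      have := hvmod _ (hcircK θ) _ hcK hd1
      rw [Real.dist_eq] at this
      linarith [abs_le.mp this |>.2]
    have hmv_ub : (∫ θ in (0:ℝ)..(2*π), v (x + (c + (ρ:ℂ)*Complex.exp ((θ:ℂ)*Complex.I)) • b))
        ≤ 2*π*(v (x + c • b)) + 2*π*(ε/16) := by
      have h := intervalIntegral.integral_mono_on (by positivity) hvint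
        (intervalIntegrable_const) hvub
      rw [intervalIntegral.integral_const, sub_zero, smul_eq_mul] at h
      linarith [h]
    have hdisc : ∀ z : ℂ, ‖z - c‖ ≤ ρ → x + z • b ∈ ball (0 : EuclideanSpace ℂ (Fin k)) 3 := by
      intro z hz
      apply hφ3
      calc ‖z‖ = ‖z - c + c‖ := by ring_nf
        _ ≤ ‖z - c‖ + ‖c‖ := norm_add_le _ _
        _ < 2 := by linarith [hρ2, hr12]
    have h1 := hvu x b c ρ hρ0 hdisc
    have h2 := hvmu x b c ρ hρ0 hdisc
    simp only [Pi.add_apply] at h1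
    simp only [Pi.sub_apply] at h2
    rw [intervalIntegral.integral_add hvint huint] at h1
    rw [intervalIntegral.integral_sub hvint huint] at h2
    have hπ : (0:ℝ) < 2*π := by positivity
    have h1' : 2*π*(v (x + c • b)) + 2*π*(u (x + c • b))
        ≤ (∫ θ in (0:ℝ)..(2*π), v (x + (c + (ρ:ℂ)*Complex.exp ((θ:ℂ)*Complex.I)) • b))
          + (∫ θ in (0:ℝ)..(2*π), u (x + (c + (ρ:ℂ)*Complex.exp ((θ:ℂ)*Complex.I)) • b)) := by
      have h := mul_le_mul_of_nonneg_left h1 hπ.le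
      rw [show 2*π*(1/(2*π) * ((∫ θ in (0:ℝ)..(2*π), v (x + (c + (ρ:ℂ)*Complex.exp ((θ:ℂ)*Complex.I)) • b))
          + (∫ θ in (0:ℝ)..(2*π), u (x + (c + (ρ:ℂ)*Complex.exp ((θ:ℂ)*Complex.I)) • b))))
        = (∫ θ in (0:ℝ)..(2*π), v (x + (c + (ρ:ℂ)*Complex.exp ((θ:ℂ)*Complex.I)) • b))
          + (∫ θ in (0:ℝ)..(2*π), u (x + (c + (ρ:ℂ)*Complex.exp ((θ:ℂ)*Complex.I)) • b)) from by
          rw [← mul_assoc, mul_one_div_cancel hπ.ne', one_mul]] at h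
      linarith [h]
    have h2' : 2*π*(v (x + c • b)) - 2*π*(u (x + c • b))
        ≤ (∫ θ in (0:ℝ)..(2*π), v (x + (c + (ρ:ℂ)*Complex.exp ((θ:ℂ)*Complex.I)) • b))
          - (∫ θ in (0:ℝ)..(2*π), u (x + (c + (ρ:ℂ)*Complex.exp ((θ:ℂ)*Complex.I)) • b)) := by
      have h := mul_le_mul_of_nonneg_left h2 hπ.le
      rw [show 2*π*(1/(2*π) * ((∫ θ in (0:ℝ)..(2*π), v (x + (c + (ρ:ℂ)*Complex.exp ((θ:ℂ)*Complex.I)) • b))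
          - (∫ θ in (0:ℝ)..(2*π), u (x + (c + (ρ:ℂ)*Complex.exp ((θ:ℂ)*Complex.I)) • b))))
        = (∫ θ in (0:ℝ)..(2*π), v (x + (c + (ρ:ℂ)*Complex.exp ((θ:ℂ)*Complex.I)) • b))
          - (∫ θ in (0:ℝ)..(2*π), u (x + (c + (ρ:ℂ)*Complex.exp ((θ:ℂ)*Complex.I)) • b)) from by
          rw [← mul_assoc, mul_one_div_cancel hπ.ne', one_mul]] at h
      linarith [h]
    rw [abs_le]
    constructor <;> linarith [h1', h2', hmv_ub]
  have hr12 : 2*r ≤ 2⁻¹ := by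
    rw [hrdef]; have := min_le_right (r0/2) (4⁻¹); norm_num at this ⊢; linarith
  have hslice_cont : ∀ c : ℂ, ‖c‖ ≤ 4⁻¹ →
      ContinuousOn (fun z : ℂ => u (x + (c + z) • b)) (closedBall (0:ℂ) (2*r)) := by
    intro c hc
    apply hu_cont.comp (by fun_prop)
    intro z hz
    rw [mem_closedBall_zero_iff] at hz
    apply hφ3
    calc ‖c + z‖ ≤ ‖c‖ + ‖z‖ := norm_add_le _ _
      _ < 2 := by
          have : ‖z‖ ≤ 2*r := by exact hz
          norm_num at hc ⊢; linarith
  have hcirc_cont : ∀ (c : ℂ), ‖c‖ ≤ 4⁻¹ → ∀ (ρ : ℝ), 0 < ρ → ρ ≤ 2*r →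
      Continuous (fun θ : ℝ => u (x + (c + (ρ:ℂ)*Complex.exp ((θ:ℂ)*Complex.I)) • b)) := by
    intro c hc ρ hρ0 hρ2
    apply hu_cont.comp_continuous (hccont c ρ)
    intro θ
    apply hφ3
    calc ‖c + (ρ:ℂ)*Complex.exp ((θ:ℂ)*Complex.I)‖
        ≤ ‖c‖ + ‖(ρ:ℂ)*Complex.exp ((θ:ℂ)*Complex.I)‖ := norm_add_le _ _
      _ < 2 := by rw [habs_exp ρ θ hρ0.le]; norm_num at hc ⊢; linarith
  have claim1 : ∀ c : ℂ, ‖c‖ ≤ 4⁻¹ →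
      |(∫ z in closedBall (0:ℂ) (2*r) \ ball 0 r, u (x + (c + z) • b))
        - (π*(2*r)^2 - π*r^2) * u (x + c • b)| ≤ 4*π*r^2*(ε/16) := by
    intro c hc
    have hA0m : MeasurableSet (closedBall (0:ℂ) (2*r) \ ball 0 r) :=
      measurableSet_closedBall.diff measurableSet_ball
    have hA0c : IsCompact (closedBall (0:ℂ) (2*r) \ ball 0 r) :=
      (isCompact_closedBall _ _).diff isOpen_ball
    have hfint : IntegrableOn (fun z : ℂ => u (x + (c + z) • b))
        (closedBall (0:ℂ) (2*r) \ ball 0 r) volume :=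
      ((hslice_cont c hc).mono diff_subset).integrableOn_compact hA0c
    have hconst : (∫ _z in closedBall (0:ℂ) (2*r) \ ball 0 r, u (x + c • b))
        = (π*(2*r)^2 - π*r^2) * u (x + c • b) := by
      rw [setIntegral_const, smul_eq_mul, measureReal_def, annulus_area 0 r (2*r) hr.le (by linarith)]
    have hsplit : (∫ z in closedBall (0:ℂ) (2*r) \ ball 0 r,
          (u (x + (c + z) • b) - u (x + c • b)))
        = (∫ z in closedBall (0:ℂ) (2*r) \ ball 0 r, u (x + (c + z) • b))
          - (π*(2*r)^2 - π*r^2) * u (x + c • b) := by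
      rw [integral_sub hfint (integrableOn_const hA0c.measure_lt_top.ne), hconst]
    have hH := polar_bound (fun z => u (x + (c + z) • b) - u (x + c • b)) r (2*π*(ε/16)) hr
      (by positivity) ((hslice_cont c hc).sub continuousOn_const) ?_
    · rw [hsplit] at hH
      have he : 2*(2*π*(ε/16))*r^2 = 4*π*r^2*(ε/16) := by ring
      rw [he] at hH
      exact hH
    · intro ρ hρ
      have hρ0 : 0 < ρ := lt_of_lt_of_le hr hρ.1
      have huint : IntervalIntegrable
          (fun θ : ℝ => u (x + (c + (ρ:ℂ)*Complex.exp ((θ:ℂ)*Complex.I)) • b)) volume 0 (2*π) :=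
        (hcirc_cont c hc ρ hρ0 hρ.2).intervalIntegrable _ _
      show |∫ θ in (0:ℝ)..(2*π),
          (u (x + (c + (ρ:ℂ)*Complex.exp ((θ:ℂ)*Complex.I)) • b) - u (x + c • b))| ≤ 2*π*(ε/16)
      rw [intervalIntegral.integral_sub huint (intervalIntegrable_const),
        intervalIntegral.integral_const, sub_zero, smul_eq_mul]
      exact hmean c hc ρ hρ
  -- Claim 2 : comparison of the two annulus integrals
  have hA0m : MeasurableSet (closedBall (0:ℂ) (2*r) \ ball 0 r) :=
    measurableSet_closedBall.diff measurableSet_ball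
  have hAdm : MeasurableSet (closedBall ((d:ℂ)) (2*r) \ ball ((d:ℂ)) r) :=
    measurableSet_closedBall.diff measurableSet_ball
  have hA0c : IsCompact (closedBall (0:ℂ) (2*r) \ ball 0 r) :=
    (isCompact_closedBall _ _).diff isOpen_ball
  have hAdc : IsCompact (closedBall ((d:ℂ)) (2*r) \ ball ((d:ℂ)) r) :=
    (isCompact_closedBall _ _).diff isOpen_ball
  have hdist_d0 : dist ((d:ℂ)) 0 = d := by
    rw [dist_zero_right, Complex.norm_real, Real.norm_eq_abs, abs_of_pos hd]
  have hgcont : ContinuousOn (fun w : ℂ => u (x + w • b)) (closedBall (0:ℂ) 1) := by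
    apply hu_cont.comp (by fun_prop)
    intro w hw
    rw [mem_closedBall_zero_iff] at hw
    apply hφ3
    linarith
  have hsubA0 : closedBall (0:ℂ) (2*r) \ ball 0 r ⊆ closedBall (0:ℂ) 1 :=
    diff_subset.trans (closedBall_subset_closedBall (by linarith))
  have hsubAd : closedBall ((d:ℂ)) (2*r) \ ball ((d:ℂ)) r ⊆ closedBall (0:ℂ) 1 := by
    intro w hw
    have h1 : dist w ((d:ℂ)) ≤ 2*r := hw.1
    rw [mem_closedBall]
    calc dist w 0 ≤ dist w ((d:ℂ)) + dist ((d:ℂ)) 0 := dist_triangle _ _ _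
      _ ≤ 2*r + d := by rw [hdist_d0]; linarith
      _ ≤ 1 := by
          have : d ≤ 4⁻¹ := hdr.trans hr4
          norm_num at this ⊢
          linarith [hr12]
  have hgintA0 : IntegrableOn (fun w : ℂ => u (x + w • b))
      (closedBall (0:ℂ) (2*r) \ ball 0 r) volume :=
    (hgcont.mono hsubA0).integrableOn_compact hA0c
  have hgintAd : IntegrableOn (fun w : ℂ => u (x + w • b))
      (closedBall ((d:ℂ)) (2*r) \ ball ((d:ℂ)) r) volume :=
    (hgcont.mono hsubAd).integrableOn_compact hAdc
  -- translation
  have hpre : (fun z : ℂ => (d:ℂ) + z) ⁻¹' (closedBall ((d:ℂ)) (2*r) \ ball ((d:ℂ)) r)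
      = closedBall (0:ℂ) (2*r) \ ball 0 r := by
    ext z
    simp only [mem_preimage, mem_diff, mem_closedBall, mem_ball,
      show dist ((d:ℂ) + z) ((d:ℂ)) = dist z 0 from by
        rw [dist_eq_norm, add_sub_cancel_left, dist_zero_right]]
  have htrans : (∫ z in closedBall (0:ℂ) (2*r) \ ball 0 r, u (x + ((d:ℂ) + z) • b))
      = ∫ w in closedBall ((d:ℂ)) (2*r) \ ball ((d:ℂ)) r, u (x + w • b) := by
    have h := (measurePreserving_add_left (volume : Measure ℂ) ((d:ℂ))).setIntegral_preimage_emb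
      (MeasurableEquiv.addLeft ((d:ℂ))).measurableEmbedding
      (fun w => u (x + w • b)) (closedBall ((d:ℂ)) (2*r) \ ball ((d:ℂ)) r)
    rw [hpre] at h
    exact h
  -- symmetric-difference measure bounds
  have hS1fin : ∀ (c : ℂ) (R : ℝ) (s : Set ℂ), s ⊆ closedBall c R → volume s ≠ ⊤ :=
    fun c R s hs => ((measure_mono hs).trans_lt measure_closedBall_lt_top).ne
  have hvol1 : (volume ((closedBall (0:ℂ) (2*r) \ ball 0 r) \
      (closedBall ((d:ℂ)) (2*r) \ ball ((d:ℂ)) r))).toReal ≤ 7*π*r*d := by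
    have hsub1 : (closedBall (0:ℂ) (2*r) \ ball 0 r) \ (closedBall ((d:ℂ)) (2*r) \ ball ((d:ℂ)) r)
        ⊆ (closedBall (0:ℂ) (r+d) \ ball 0 r) ∪ (closedBall (0:ℂ) (2*r) \ ball 0 (2*r-d)) := by
      rintro z ⟨⟨hz1, hz2⟩, hz3⟩
      rw [mem_closedBall] at hz1
      simp only [mem_diff, mem_closedBall, mem_ball, not_and, not_not] at hz3
      by_cases hcase : dist z ((d:ℂ)) ≤ 2*r
      · left
        refine ⟨?_, hz2⟩
        rw [mem_closedBall]
        calc dist z 0 ≤ dist z ((d:ℂ)) + dist ((d:ℂ)) 0 := dist_triangle _ _ _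
          _ ≤ r + d := by rw [hdist_d0]; linarith [hz3 hcase]
      · right
        push_neg at hcase
        refine ⟨mem_closedBall.mpr hz1, ?_⟩
        rw [mem_ball, not_lt]
        have h := dist_triangle z 0 ((d:ℂ))
        rw [dist_comm 0 ((d:ℂ)), hdist_d0] at h
        linarith
    have hfin1 := hS1fin 0 (r+d) _ (diff_subset (s := closedBall (0:ℂ) (r+d)) (t := ball 0 r))
    have hfin2 := hS1fin 0 (2*r) _ (diff_subset (s := closedBall (0:ℂ) (2*r)) (t := ball 0 (2*r-d)))
    calc (volume ((closedBall (0:ℂ) (2*r) \ ball 0 r) \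
          (closedBall ((d:ℂ)) (2*r) \ ball ((d:ℂ)) r))).toReal
        ≤ ((volume (closedBall (0:ℂ) (r+d) \ ball 0 r))
            + volume (closedBall (0:ℂ) (2*r) \ ball 0 (2*r-d))).toReal := by
          apply ENNReal.toReal_mono (ENNReal.add_ne_top.mpr ⟨hfin1, hfin2⟩)
          exact (measure_mono hsub1).trans (measure_union_le _ _)
      _ = (volume (closedBall (0:ℂ) (r+d) \ ball 0 r)).toReal
            + (volume (closedBall (0:ℂ) (2*r) \ ball 0 (2*r-d))).toReal :=
          ENNReal.toReal_add hfin1 hfin2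
      _ = (π*(r+d)^2 - π*r^2) + (π*(2*r)^2 - π*(2*r-d)^2) := by
          rw [annulus_area 0 r (r+d) hr.le (by linarith),
            annulus_area 0 (2*r-d) (2*r) (by linarith) (by linarith)]
      _ ≤ 7*π*r*d := by nlinarith [mul_pos (mul_pos pi_pos hr) hd, pi_pos, hd, hr]
  have hvol2 : (volume ((closedBall ((d:ℂ)) (2*r) \ ball ((d:ℂ)) r) \
      (closedBall (0:ℂ) (2*r) \ ball 0 r))).toReal ≤ 7*π*r*d := by
    have hsub2 : (closedBall ((d:ℂ)) (2*r) \ ball ((d:ℂ)) r) \ (closedBall (0:ℂ) (2*r) \ ball 0 r)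
        ⊆ (closedBall ((d:ℂ)) (r+d) \ ball ((d:ℂ)) r) ∪ (closedBall ((d:ℂ)) (2*r) \ ball ((d:ℂ)) (2*r-d)) := by
      rintro z ⟨⟨hz1, hz2⟩, hz3⟩
      rw [mem_closedBall] at hz1
      simp only [mem_diff, mem_closedBall, mem_ball, not_and, not_not] at hz3
      by_cases hcase : dist z 0 ≤ 2*r
      · left
        refine ⟨?_, hz2⟩
        rw [mem_closedBall]
        calc dist z ((d:ℂ)) ≤ dist z 0 + dist 0 ((d:ℂ)) := dist_triangle _ _ _
          _ ≤ r + d := by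
              rw [dist_comm 0 ((d:ℂ)), hdist_d0]
              linarith [hz3 hcase]
      · right
        push_neg at hcase
        refine ⟨mem_closedBall.mpr hz1, ?_⟩
        rw [mem_ball, not_lt]
        have h := dist_triangle z ((d:ℂ)) 0
        rw [hdist_d0] at h
        linarith
    have hfin1 := hS1fin ((d:ℂ)) (r+d) _ (diff_subset (s := closedBall ((d:ℂ)) (r+d)) (t := ball ((d:ℂ)) r))
    have hfin2 := hS1fin ((d:ℂ)) (2*r) _ (diff_subset (s := closedBall ((d:ℂ)) (2*r)) (t := ball ((d:ℂ)) (2*r-d)))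
    calc (volume ((closedBall ((d:ℂ)) (2*r) \ ball ((d:ℂ)) r) \
          (closedBall (0:ℂ) (2*r) \ ball 0 r))).toReal
        ≤ ((volume (closedBall ((d:ℂ)) (r+d) \ ball ((d:ℂ)) r))
            + volume (closedBall ((d:ℂ)) (2*r) \ ball ((d:ℂ)) (2*r-d))).toReal := by
          apply ENNReal.toReal_mono (ENNReal.add_ne_top.mpr ⟨hfin1, hfin2⟩)
          exact (measure_mono hsub2).trans (measure_union_le _ _)
      _ = (volume (closedBall ((d:ℂ)) (r+d) \ ball ((d:ℂ)) r)).toReal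
            + (volume (closedBall ((d:ℂ)) (2*r) \ ball ((d:ℂ)) (2*r-d))).toReal :=
          ENNReal.toReal_add hfin1 hfin2
      _ = (π*(r+d)^2 - π*r^2) + (π*(2*r)^2 - π*(2*r-d)^2) := by
          rw [annulus_area ((d:ℂ)) r (r+d) hr.le (by linarith),
            annulus_area ((d:ℂ)) (2*r-d) (2*r) (by linarith) (by linarith)]
      _ ≤ 7*π*r*d := by nlinarith [mul_pos (mul_pos pi_pos hr) hd, pi_pos, hd, hr]
  set A0 : Set ℂ := closedBall (0:ℂ) (2*r) \ ball 0 r with hA0def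
  set Ad : Set ℂ := closedBall ((d:ℂ)) (2*r) \ ball ((d:ℂ)) r with hAddef
  have hinterfin : volume (A0 ∩ Ad) ≠ ⊤ :=
    hS1fin 0 (2*r) _ (inter_subset_left.trans diff_subset)
  have hvoleq : (volume (A0 \ Ad)).toReal = (volume (Ad \ A0)).toReal := by
    have e0 : volume A0 = volume Ad := by
      have hsub0 : ball (0:ℂ) r ⊆ closedBall (0:ℂ) (2*r) :=
        ball_subset_closedBall.trans (closedBall_subset_closedBall (by linarith))
      have hsubd : ball ((d:ℂ)) r ⊆ closedBall ((d:ℂ)) (2*r) :=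
        ball_subset_closedBall.trans (closedBall_subset_closedBall (by linarith))
      rw [hA0def, hAddef,
        measure_diff hsub0 measurableSet_ball.nullMeasurableSet
          (measure_ball_lt_top (μ := (volume : Measure ℂ))).ne,
        measure_diff hsubd measurableSet_ball.nullMeasurableSet
          (measure_ball_lt_top (μ := (volume : Measure ℂ))).ne,
        Complex.volume_closedBall, Complex.volume_closedBall,
        Complex.volume_ball, Complex.volume_ball]
    rw [← Set.diff_self_inter (s := A0) (t := Ad), ← Set.diff_self_inter (s := Ad) (t := A0),
      measure_diff inter_subset_left ((hA0m.inter hAdm).nullMeasurableSet) hinterfin,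
      measure_diff inter_subset_left ((hAdm.inter hA0m).nullMeasurableSet)
        (by rwa [Set.inter_comm Ad A0]),
      Set.inter_comm Ad A0, e0]
  have hsplit0 : (∫ z in A0, u (x + z • b))
      = (∫ z in A0 \ Ad, u (x + z • b)) + ∫ z in A0 ∩ Ad, u (x + z • b) := by
    conv_lhs => rw [← Set.diff_union_inter A0 Ad]
    exact setIntegral_union (Set.disjoint_left.mpr fun z hz hz2 => hz.2 hz2.2)
      (hA0m.inter hAdm) (hgintA0.mono_set diff_subset) (hgintA0.mono_set inter_subset_left)
  have hsplitd : (∫ z in Ad, u (x + z • b))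
      = (∫ z in Ad \ A0, u (x + z • b)) + ∫ z in A0 ∩ Ad, u (x + z • b) := by
    conv_lhs => rw [← Set.diff_union_inter Ad A0]
    rw [setIntegral_union (Set.disjoint_left.mpr fun z hz hz2 => hz.2 hz2.2)
      (hAdm.inter hA0m) (hgintAd.mono_set diff_subset) (hgintAd.mono_set inter_subset_left),
      Set.inter_comm Ad A0]
  have hint1 : IntegrableOn (fun z : ℂ => u (x + z • b)) (closedBall (0:ℂ) 1) volume :=
    hgcont.integrableOn_compact (isCompact_closedBall _ _)
  have hptw : ∀ z ∈ closedBall (0:ℂ) 1, |u (x + z • b) - u x| ≤ M := by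
    intro z hz
    rw [mem_closedBall_zero_iff] at hz
    have hmem2 : x + z • b ∈ ball (0 : EuclideanSpace ℂ (Fin k)) 2 := by
      rw [mem_ball_zero_iff]
      calc ‖x + z • b‖ ≤ ‖x‖ + ‖z • b‖ := norm_add_le _ _
        _ < 2 := by
            have : ‖z • b‖ ≤ 1 := by rw [hzb]; exact hz
            linarith
    have hx2 : x ∈ ball (0 : EuclideanSpace ℂ (Fin k)) 2 := by
      rw [mem_ball_zero_iff]; linarith
    exact hosc' _ hmem2 _ hx2
  have hpiece : ∀ s : Set ℂ, MeasurableSet s → s ⊆ closedBall (0:ℂ) 1 →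
      |(∫ z in s, u (x + z • b)) - (volume s).toReal * u x| ≤ M * (volume s).toReal := by
    intro s hsm hss
    have hfin : volume s < ⊤ := lt_of_le_of_lt (measure_mono hss) measure_closedBall_lt_top
    have hint := hint1.mono_set hss
    rw [show (∫ z in s, u (x + z • b)) - (volume s).toReal * u x
        = ∫ z in s, (u (x + z • b) - u x) from by
      rw [integral_sub hint (integrableOn_const hfin.ne), setIntegral_const,
        smul_eq_mul, measureReal_def]]
    rw [← Real.norm_eq_abs]
    exact norm_setIntegral_le_of_norm_le_const hfin
      (fun z hz => by rw [Real.norm_eq_abs]; exact hptw z (hss hz))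
  have hc2 : |(∫ z in A0, u (x + ((d:ℂ) + z) • b)) - (∫ z in A0, u (x + z • b))| ≤ 14*π*M*r*d := by
    rw [htrans, hsplitd, hsplit0]
    have hP0 := hpiece (A0 \ Ad) (hA0m.diff hAdm) (diff_subset.trans hsubA0)
    have hPd := hpiece (Ad \ A0) (hAdm.diff hA0m) (diff_subset.trans hsubAd)
    have hv0 : (volume (A0 \ Ad)).toReal ≤ 7*π*r*d := hvol1
    have hvd : (volume (Ad \ A0)).toReal ≤ 7*π*r*d := hvol2
    have hveq := hvoleq
    have e : ((∫ z in Ad \ A0, u (x + z • b)) + ∫ z in A0 ∩ Ad, u (x + z • b))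
          - ((∫ z in A0 \ Ad, u (x + z • b)) + ∫ z in A0 ∩ Ad, u (x + z • b))
        = ((∫ z in Ad \ A0, u (x + z • b)) - (volume (Ad \ A0)).toReal * u x)
          - ((∫ z in A0 \ Ad, u (x + z • b)) - (volume (A0 \ Ad)).toReal * u x) := by
      rw [hveq]; ring
    rw [e]
    calc |((∫ z in Ad \ A0, u (x + z • b)) - (volume (Ad \ A0)).toReal * u x)
          - ((∫ z in A0 \ Ad, u (x + z • b)) - (volume (A0 \ Ad)).toReal * u x)|
        ≤ |(∫ z in Ad \ A0, u (x + z • b)) - (volume (Ad \ A0)).toReal * u x|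
          + |(∫ z in A0 \ Ad, u (x + z • b)) - (volume (A0 \ Ad)).toReal * u x| :=
          abs_sub _ _
      _ ≤ M * (volume (Ad \ A0)).toReal + M * (volume (A0 \ Ad)).toReal := by
          linarith [hP0, hPd]
      _ ≤ 14*π*M*r*d := by
          have b0 := mul_le_mul_of_nonneg_left hv0 hM.le
          have bd := mul_le_mul_of_nonneg_left hvd hM.le
          nlinarith [b0, bd]
  -- final assembly
  have habs_d : ‖(d:ℂ)‖ ≤ 4⁻¹ := by
    rw [Complex.norm_real, Real.norm_eq_abs, abs_of_pos hd]; exact hdr.trans hr4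
  have h0 := claim1 0 (by simp)
  simp only [zero_add, zero_smul, add_zero] at h0
  have hd1 := claim1 ((d:ℂ)) habs_d
  have hxy : x + (d:ℂ) • b = y := by rw [hdb]; abel
  rw [hxy] at hd1
  set N : ℝ := π*(2*r)^2 - π*r^2 with hN
  have hNpos : 0 < N := by rw [hN]; nlinarith [mul_pos pi_pos (mul_pos hr hr)]
  set I0 : ℝ := ∫ z in A0, u (x + z • b) with hI0
  set Id : ℝ := ∫ z in A0, u (x + ((d:ℂ) + z) • b) with hId
  have htri : N * |u x - u y| ≤ 8*π*r^2*(ε/16) + 14*π*M*r*d := by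
    have e1 : N * (u x - u y) = ((N * u x - I0) + (I0 - Id)) + (Id - N * u y) := by ring
    calc N * |u x - u y| = |N * (u x - u y)| := by
          rw [abs_mul, abs_of_pos hNpos]
      _ = |((N * u x - I0) + (I0 - Id)) + (Id - N * u y)| := by rw [e1]
      _ ≤ |(N * u x - I0) + (I0 - Id)| + |Id - N * u y| := abs_add_le _ _
      _ ≤ |N * u x - I0| + |I0 - Id| + |Id - N * u y| := by
          linarith [abs_add_le (N * u x - I0) (I0 - Id)]
      _ ≤ 8*π*r^2*(ε/16) + 14*π*M*r*d := by
          have a1 : |N * u x - I0| ≤ 4*π*r^2*(ε/16) := by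
            rw [abs_sub_comm]; exact h0
          have a2 : |I0 - Id| ≤ 14*π*M*r*d := by rw [abs_sub_comm]; exact hc2
          have a3 : |Id - N * u y| ≤ 4*π*r^2*(ε/16) := hd1
          linarith
  have h14 : 14*π*M*r*d ≤ π*r^2*ε := by
    have h1 : (0:ℝ) < 14*M := by positivity
    have h2 : d * (14*M) ≤ r*ε := by
      have h3 := hdε
      rw [le_div_iff₀ h1] at h3
      exact h3
    nlinarith [pi_pos]
  have hfin : N * |u x - u y| ≤ N * ε := by
    calc N * |u x - u y| ≤ 8*π*r^2*(ε/16) + 14*π*M*r*d := htri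
      _ ≤ 8*π*r^2*(ε/16) + π*r^2*ε := by linarith
      _ ≤ N * ε := by rw [hN]; nlinarith [pi_pos, hr, hε]
  exact le_of_mul_le_mul_left hfin hNpos
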